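/- Let ρ be an action of a 3-Lie algebra g on a 3-Lie algebra h, let H : g → h be a crossed homomorphism with respect to ρ, let D be the semidirect product bracket on E = g ⊕ h, and let H̃ ∈ End(E) be given by H̃(x,u) = (0, Hx). Then the iterated Nijenhuis–Richardson derived bracket satisfies [[D,H̃],H̃]((x,u),(y,v),(z,w)) = 2·(0, [Hx,Hy,w]_h + [Hx,v,Hz]_h + [u,Hy,Hz]_h) for all x,y,z ∈ g and u,v,w ∈ h. -/

import Mathlib

/-- A 3-Lie algebra over a field `K`: a `K`-vector space with a trilinear,
totally skew-symmetric bracket satisfying the fundamental identity. -/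
structure ThreeLie (K V : Type*) [Field K] [AddCommGroup V] [Module K V] where
  br : V →ₗ[K] V →ₗ[K] V →ₗ[K] V
  skew₁₂ : ∀ x y z, br x y z = - br y x z
  skew₂₃ : ∀ x y z, br x y z = - br x z y
  fund : ∀ x₁ x₂ x₃ x₄ x₅,
    br x₁ x₂ (br x₃ x₄ x₅) =
      br (br x₁ x₂ x₃) x₄ x₅ + br x₃ (br x₁ x₂ x₄) x₅ + br x₃ x₄ (br x₁ x₂ x₅)

/-- A representation of a 3-Lie algebra `(g, Lg)` on a vector space `V`. -/
structure ThreeLieRep (K g V : Type*) [Field K] [AddCommGroup g] [Module K g]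
    [AddCommGroup V] [Module K V] (Lg : ThreeLie K g) where
  ρ : g →ₗ[K] g →ₗ[K] (V →ₗ[K] V)
  skew : ∀ x y, ρ x y = - ρ y x
  rep₁ : ∀ x₁ x₂ x₃ x₄,
    ρ x₁ x₂ ∘ₗ ρ x₃ x₄ =
      ρ (Lg.br x₁ x₂ x₃) x₄ + ρ x₃ (Lg.br x₁ x₂ x₄) + ρ x₃ x₄ ∘ₗ ρ x₁ x₂
  rep₂ : ∀ x₁ x₂ x₃ x₄,
    ρ x₁ (Lg.br x₂ x₃ x₄) =
      ρ x₃ x₄ ∘ₗ ρ x₁ x₂ - ρ x₂ x₄ ∘ₗ ρ x₁ x₃ + ρ x₂ x₃ ∘ₗ ρ x₁ x₄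

/-- An action of a 3-Lie algebra `(g, Lg)` on a 3-Lie algebra `(h, Lh)`:
a representation of `g` on `h` all of whose values are central in `h`
and which kills brackets of `h`. -/
structure ThreeLieAction (K g h : Type*) [Field K] [AddCommGroup g] [Module K g]
    [AddCommGroup h] [Module K h] (Lg : ThreeLie K g) (Lh : ThreeLie K h)
    extends ThreeLieRep K g h Lg where
  central : ∀ x y u v w, Lh.br (ρ x y u) v w = 0
  annih : ∀ x y u v w, ρ x y (Lh.br u v w) = 0

/-- `H : g → h` is a crossed homomorphism with respect to the action `A`. -/
def IsCrossedHom {K g h : Type*} [Field K] [AddCommGroup g] [Module K g]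
    [AddCommGroup h] [Module K h] {Lg : ThreeLie K g} {Lh : ThreeLie K h}
    (A : ThreeLieAction K g h Lg Lh) (H : g →ₗ[K] h) : Prop :=
  ∀ x y z, H (Lg.br x y z) =
    A.ρ x y (H z) + A.ρ y z (H x) + A.ρ z x (H y) + Lh.br (H x) (H y) (H z)

/-- The Nijenhuis–Richardson derived bracket of a trilinear map `T` with a linear
(0-cochain) map `L`:
`[T,L](a,b,c) = T(La,b,c) + T(a,Lb,c) + T(a,b,Lc) − L(T(a,b,c))`. -/
def nrBr {E : Type*} [AddCommGroup E] (T : E → E → E → E) (L : E → E) :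
    E → E → E → E := fun a b c =>
  T (L a) b c + T a (L b) c + T a b (L c) - L (T a b c)

/-- The semidirect product bracket `D` on `E = g × h` induced by an action. -/
def sdBr {K g h : Type*} [Field K] [AddCommGroup g] [Module K g]
    [AddCommGroup h] [Module K h] {Lg : ThreeLie K g} {Lh : ThreeLie K h}
    (A : ThreeLieAction K g h Lg Lh) (x y z : g × h) : g × h :=
  (Lg.br x.1 y.1 z.1,
    A.ρ x.1 y.1 z.2 + A.ρ y.1 z.1 x.2 + A.ρ z.1 x.1 y.2 + Lh.br x.2 y.2 z.2)

/-- Let `H` be a crossed homomorphism with respect to an action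
`A`, let `D` be the semidirect product bracket on `E = g × h`, and let
`H̃(x,u) = (0, Hx)`.  Then
`[[D,H̃],H̃]((x,u),(y,v),(z,w)) = 2·(0, [Hx,Hy,w]_h + [Hx,v,Hz]_h + [u,Hy,Hz]_h)`. -/
theorem derived_bracket_square
    (K g h : Type*) [Field K] [CharZero K] [AddCommGroup g] [Module K g]
    [AddCommGroup h] [Module K h] (Lg : ThreeLie K g) (Lh : ThreeLie K h)
    (A : ThreeLieAction K g h Lg Lh) (H : g →ₗ[K] h) (hH : IsCrossedHom A H) :
    ∀ (x y z : g) (u v w : h),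
      nrBr (nrBr (sdBr A) (fun p => ((0 : g), H p.1))) (fun p => ((0 : g), H p.1))
          (x, u) (y, v) (z, w) =
        (2 : ℤ) • (((0 : g),
          Lh.br (H x) (H y) w + Lh.br (H x) v (H z) + Lh.br u (H y) (H z)) : g × h) := by
  intro x y z u v w
  have c2 : ∀ a b p q r, Lh.br p (A.ρ a b q) r = 0 := by
    intro a b p q r
    rw [Lh.skew₁₂, A.central, neg_zero]
  have c3 : ∀ a b p q r, Lh.br p q (A.ρ a b r) = 0 := by
    intro a b p q r
    rw [Lh.skew₂₃, c2, neg_zero]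
  simp only [nrBr, sdBr, hH, map_zero, map_add, LinearMap.zero_apply, LinearMap.add_apply,
    A.central, A.annih, c2, c3, zero_add, add_zero, Prod.mk_add_mk, Prod.mk_sub_mk,
    Prod.smul_mk, smul_zero]
  simp only [sub_zero, zero_sub, neg_zero, zero_add, add_zero, map_zero, two_smul,
    Prod.mk.injEq]
  exact ⟨trivial, by abel⟩
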